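/- Let H, K, L be Hilbert spaces, and let Δ ⊆ L(H,K) and Γ ⊆ L(K,L) be concrete C*-modules such that [Γ*ΓΔ] ⊆ Δ. Then the closed linear span [ΓΔ] ⊆ L(H,L) is a concrete C*-module, i.e., [[ΓΔ][ΓΔ]*[ΓΔ]] = [ΓΔ]. -/

import Mathlib

set_option maxHeartbeats 1000000

noncomputable section
open ContinuousLinearMap

/-- Closed linear span of a subset of a complex normed space. -/
def clspan {E : Type*} [NormedAddCommGroup E] [NormedSpace ℂ E] (S : Set E) : Set E :=
  ((Submodule.span ℂ S).topologicalClosure : Set E)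

lemma subset_clspan {E : Type*} [NormedAddCommGroup E] [NormedSpace ℂ E] (S : Set E) :
    S ⊆ clspan S :=
  fun x hx => (Submodule.span ℂ S).le_topologicalClosure (Submodule.subset_span hx)

lemma clspan_subset {E : Type*} [NormedAddCommGroup E] [NormedSpace ℂ E] {S : Set E}
    {N : Submodule ℂ E} (hN : IsClosed (N : Set E)) (h : S ⊆ N) :
    clspan S ⊆ (N : Set E) :=
  (Submodule.span ℂ S).topologicalClosure_minimal (Submodule.span_le.mpr h) hN

section Aux

variable {H K L : Type*} [NormedAddCommGroup H] [InnerProductSpace ℂ H] [CompleteSpace H]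
  [NormedAddCommGroup K] [InnerProductSpace ℂ K] [CompleteSpace K]
  [NormedAddCommGroup L] [InnerProductSpace ℂ L] [CompleteSpace L]

/-- Extending a "triple product lands in a closed submodule" statement from generators to
closed spans. -/
lemma tri_mem (N : Submodule ℂ (H →L[ℂ] L)) (hN : IsClosed (N : Set (H →L[ℂ] L)))
    (S₁ S₂ S₃ : Set (H →L[ℂ] L))
    (h : ∀ a ∈ S₁, ∀ b ∈ S₂, ∀ c ∈ S₃, (a ∘L adjoint b) ∘L c ∈ N) :
    ∀ a ∈ clspan S₁, ∀ b ∈ clspan S₂, ∀ c ∈ clspan S₃, (a ∘L adjoint b) ∘L c ∈ N := by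
  have hadj : Continuous fun b : H →L[ℂ] L => adjoint b :=
    (ContinuousLinearMap.adjoint (E := H) (F := L) (𝕜 := ℂ)).continuous
  -- peel the third variable
  have h1 : ∀ a ∈ S₁, ∀ b ∈ S₂, ∀ c ∈ clspan S₃, (a ∘L adjoint b) ∘L c ∈ N := by
    intro a ha b hb c hc
    let P : Submodule ℂ (H →L[ℂ] L) :=
      { carrier := {x | (a ∘L adjoint b) ∘L x ∈ N}
        add_mem' := fun {x y} hx hy => by
          simp only [Set.mem_setOf_eq, comp_add] at *
          exact N.add_mem hx hy
        zero_mem' := by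
          simp only [Set.mem_setOf_eq, comp_zero]
          exact N.zero_mem
        smul_mem' := fun s x hx => by
          simp only [Set.mem_setOf_eq, comp_smul] at *
          exact N.smul_mem s hx }
    have hPc : IsClosed (P : Set (H →L[ℂ] L)) := by
      have hcont : Continuous fun x : H →L[ℂ] L => (a ∘L adjoint b) ∘L x :=
        continuous_const.clm_comp continuous_id
      exact hN.preimage hcont
    exact clspan_subset hPc (fun x hx => h a ha b hb x hx) hc
  -- peel the second variable
  have h2 : ∀ a ∈ S₁, ∀ b ∈ clspan S₂, ∀ c ∈ clspan S₃, (a ∘L adjoint b) ∘L c ∈ N := by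
    intro a ha b hb c hc
    let P : Submodule ℂ (H →L[ℂ] L) :=
      { carrier := {x | (a ∘L adjoint x) ∘L c ∈ N}
        add_mem' := fun {x y} hx hy => by
          simp only [Set.mem_setOf_eq, map_add, comp_add, add_comp] at *
          exact N.add_mem hx hy
        zero_mem' := by
          simp only [Set.mem_setOf_eq, map_zero, comp_zero, zero_comp]
          exact N.zero_mem
        smul_mem' := fun s x hx => by
          simp only [Set.mem_setOf_eq] at *
          rw [map_smulₛₗ, comp_smul, smul_comp]
          exact N.smul_mem _ hx }
    have hPc : IsClosed (P : Set (H →L[ℂ] L)) := by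
      have hcont : Continuous fun x : H →L[ℂ] L => (a ∘L adjoint x) ∘L c :=
        (continuous_const.clm_comp hadj).clm_comp continuous_const
      exact hN.preimage hcont
    exact clspan_subset hPc (fun x hx => h1 a ha x hx c hc) hb
  -- peel the first variable
  intro a ha b hb c hc
  let P : Submodule ℂ (H →L[ℂ] L) :=
    { carrier := {x | (x ∘L adjoint b) ∘L c ∈ N}
      add_mem' := fun {x y} hx hy => by
        simp only [Set.mem_setOf_eq, add_comp] at *
        exact N.add_mem hx hy
      zero_mem' := by
        simp only [Set.mem_setOf_eq, zero_comp]
        exact N.zero_mem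
      smul_mem' := fun s x hx => by
        simp only [Set.mem_setOf_eq, smul_comp] at *
        exact N.smul_mem s hx }
  have hPc : IsClosed (P : Set (H →L[ℂ] L)) := by
    have hcont : Continuous fun x : H →L[ℂ] L => (x ∘L adjoint b) ∘L c :=
      (continuous_id.clm_comp continuous_const).clm_comp continuous_const
    exact hN.preimage hcont
  exact clspan_subset hPc (fun x hx => h2 x hx b hb c hc) ha

/-- The key abstract statement: if triple products of elements of the closed span of `V`
land back in the closed span of `V`, then the closed span of `V` is a concrete C*-module. -/
lemma key (V : Set (H →L[ℂ] L))
    (hV : ∀ a ∈ clspan V, ∀ b ∈ clspan V, ∀ c ∈ clspan V,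
      (a ∘L adjoint b) ∘L c ∈ (Submodule.span ℂ V).topologicalClosure) :
    clspan (Set.image2 (fun (S : L →L[ℂ] L) (T : H →L[ℂ] L) => S ∘L T)
        (Set.image2 (fun (S T : H →L[ℂ] L) => S ∘L adjoint T) (clspan V) (clspan V))
        (clspan V)) = clspan V := by
  classical
  set M' : Submodule ℂ (H →L[ℂ] L) := (Submodule.span ℂ V).topologicalClosure with hM'
  set Tset : Set (H →L[ℂ] L) := Set.image2 (fun (S : L →L[ℂ] L) (T : H →L[ℂ] L) => S ∘L T)
      (Set.image2 (fun (S T : H →L[ℂ] L) => S ∘L adjoint T) (clspan V) (clspan V))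
      (clspan V) with hTset
  set T' : Submodule ℂ (H →L[ℂ] L) := (Submodule.span ℂ Tset).topologicalClosure with hT'
  have hTsub : Tset ⊆ (M' : Set (H →L[ℂ] L)) := by
    rintro x hx
    obtain ⟨y, hy, m3, hm3, rfl⟩ := hx
    obtain ⟨m1, hm1, m2, hm2, rfl⟩ := hy
    exact hV m1 hm1 m2 hm2 m3 hm3
  apply Set.Subset.antisymm
  · exact clspan_subset (Submodule.isClosed_topologicalClosure _) hTsub
  · -- the hard direction: clspan V ⊆ clspan Tset
    intro v hv
    show v ∈ (T' : Set (H →L[ℂ] L))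
    have hvM : v ∈ M' := hv
    set a : H →L[ℂ] H := adjoint v ∘L v with ha
    have hsa : IsSelfAdjoint a := by
      rw [IsSelfAdjoint, star_eq_adjoint, ha, adjoint_comp, adjoint_adjoint]
    have hpos : a.IsPositive := by
      have := (isPositive_one (E := L) (𝕜 := ℂ)).adjoint_conj v
      rw [ContinuousLinearMap.one_def, ContinuousLinearMap.id_comp] at this
      simpa [ha] using this
    -- the key multiplication step
    have hstep : ∀ x : H →L[ℂ] H, v ∘L x ∈ M' →
        (v ∘L (a * x) ∈ M' ∧ v ∘L (a * x) ∈ T') := by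
      intro x hx
      have heq : v ∘L (a * x) = (v ∘L adjoint v) ∘L (v ∘L x) := by
        ext y; rfl
      have hmemT : v ∘L (a * x) ∈ Tset := by
        rw [heq, hTset]
        exact Set.mem_image2_of_mem (Set.mem_image2_of_mem hv hv) hx
      refine ⟨?_, subset_clspan Tset hmemT⟩
      rw [heq]
      exact hV v hv v hv _ hx
    rcases eq_or_ne ‖a‖ 0 with hc0 | hc0
    · -- degenerate case : v = 0
      have hv0 : v = 0 := by
        have h2 : ‖v‖ * ‖v‖ = 0 := by
          rw [← norm_adjoint_comp_self v, ← ha]; exact hc0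
        have : ‖v‖ = 0 := by nlinarith [norm_nonneg v]
        exact norm_eq_zero.mp this
      rw [hv0]
      exact T'.zero_mem
    · have hcpos : 0 < ‖a‖ := lt_of_le_of_ne (norm_nonneg a) (Ne.symm hc0)
      haveI : Nontrivial H := by
        rcases subsingleton_or_nontrivial H with hs | hn
        · exfalso
          apply hc0
          have : a = 0 := by ext x; rw [Subsingleton.elim x 0]; simp
          rw [this, norm_zero]
        · exact hn
      set c : ℝ := ‖a‖ with hc
      set u : ℂ := ((c⁻¹ : ℝ) : ℂ) with hu
      set e : H →L[ℂ] H := 1 - u • a with he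
      have hsu : star u = u := by rw [hu, Complex.star_def, Complex.conj_ofReal]
      have hcm : Commute a e := by
        rw [he]
        exact (Commute.one_right a).sub_right ((Commute.refl a).smul_right u)
      have hsae : IsSelfAdjoint e := by
        rw [IsSelfAdjoint, he, star_sub, star_one, star_smul, hsu, hsa.star_eq]
      have hrec : ∀ n : ℕ, e ^ (n + 1) = e ^ n - u • (a * e ^ n) := by
        intro n
        rw [pow_succ]
        nth_rewrite 2 [he]
        rw [mul_sub, mul_one, mul_smul_comm, (hcm.symm.pow_left n).eq]
      -- main induction
      have hmain : ∀ n : ℕ, v ∘L e ^ n ∈ M' ∧ v ∘L ((1 : H →L[ℂ] H) - e ^ n) ∈ T' := by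
        intro n
        induction n with
        | zero =>
          constructor
          · rw [pow_zero, ContinuousLinearMap.one_def, ContinuousLinearMap.comp_id]
            exact hvM
          · rw [pow_zero, sub_self, comp_zero]
            exact T'.zero_mem
        | succ n ih =>
          obtain ⟨ih1, ih2⟩ := ih
          obtain ⟨hs1, hs2⟩ := hstep (e ^ n) ih1
          constructor
          · rw [hrec n, comp_sub, comp_smul]
            exact M'.sub_mem ih1 (M'.smul_mem u hs1)
          · have heq2 : (1 : H →L[ℂ] H) - e ^ (n + 1)
                = ((1 : H →L[ℂ] H) - e ^ n) + u • (a * e ^ n) := by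
              rw [hrec n]; abel
            rw [heq2, comp_add, comp_smul]
            exact T'.add_mem ih2 (T'.smul_mem u hs2)
      -- the C*-identity
      have hw : ∀ n : ℕ, adjoint (v ∘L e ^ n) ∘L (v ∘L e ^ n) = a * e ^ (n * 2) := by
        intro n
        have hadj : adjoint (e ^ n) = e ^ n := by
          rw [← star_eq_adjoint, (hsae.pow n).star_eq]
        rw [adjoint_comp, hadj]
        have h1 : ((e ^ n) ∘L adjoint v) ∘L (v ∘L e ^ n) = e ^ n * (a * e ^ n) := by
          ext y; rfl
        rw [h1, ← mul_assoc, (hcm.symm.pow_left n).eq, mul_assoc, ← sq, ← pow_mul]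
      -- norm bound via spectral theory
      have hnorm : ∀ n : ℕ, ∀ B : ℝ, 0 ≤ B →
          (∀ t : ℝ, 0 ≤ t → t ≤ c → t * (1 - c⁻¹ * t) ^ (n * 2) ≤ B) →
          ‖a * e ^ (n * 2)‖ ≤ B := by
        intro n B hB0 hB
        set m : ℕ := n * 2 with hm
        set w : H →L[ℂ] H := a * e ^ m with hwdef
        have hsw : IsSelfAdjoint w := by
          rw [IsSelfAdjoint, hwdef, star_mul, (hsae.pow m).star_eq, hsa.star_eq,
            (hcm.pow_right m).eq]
        have haev : w = Polynomial.aeval a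
            (Polynomial.X * ((1 : Polynomial ℂ) - Polynomial.C u * Polynomial.X) ^ m) := by
          rw [map_mul, map_pow, map_sub, map_one, map_mul, Polynomial.aeval_X,
            Polynomial.aeval_C, ← Algebra.smul_def, hwdef, he]
        have hspec : ∀ z ∈ spectrum ℂ a, ∃ t : ℝ, 0 ≤ t ∧ t ≤ c ∧ z = (t : ℂ) := by
          intro z hz
          have h1 : z = z.re := SpectrumRestricts.real_iff.mp hsa.spectrumRestricts z hz
          have h2 : z.re ∈ spectrum ℝ a := hsa.spectrumRestricts.apply_mem hz
          have h3 : 0 ≤ z.re := SpectrumRestricts.nnreal_iff.mp hpos.spectrumRestricts z.re h2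
          refine ⟨z.re, h3, ?_, by exact_mod_cast h1⟩
          calc z.re ≤ |z.re| := le_abs_self _
            _ ≤ ‖z‖ := Complex.abs_re_le_norm z
            _ ≤ ‖a‖ := spectrum.norm_le_norm_of_mem hz
        have hsp : spectrum ℂ w = (fun k => Polynomial.eval k
            (Polynomial.X * ((1 : Polynomial ℂ) - Polynomial.C u * Polynomial.X) ^ m)) ''
            spectrum ℂ a := by
          rw [haev]
          exact spectrum.map_polynomial_aeval_of_nonempty a _ (spectrum.nonempty a)
        have hbound : ∀ z ∈ spectrum ℂ w, ‖z‖ ≤ B := by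
          rw [hsp]
          rintro _ ⟨ζ, hζ, rfl⟩
          obtain ⟨t, ht0, htc, rfl⟩ := hspec ζ hζ
          show ‖Polynomial.eval ((t : ℝ) : ℂ)
            (Polynomial.X * ((1 : Polynomial ℂ) - Polynomial.C u * Polynomial.X) ^ m)‖ ≤ B
          have hev : Polynomial.eval ((t : ℝ) : ℂ)
              (Polynomial.X * ((1 : Polynomial ℂ) - Polynomial.C u * Polynomial.X) ^ m)
              = (((t * (1 - c⁻¹ * t) ^ m : ℝ)) : ℂ) := by
            simp only [Polynomial.eval_mul, Polynomial.eval_pow, Polynomial.eval_sub,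
              Polynomial.eval_one, Polynomial.eval_C, Polynomial.eval_X, hu]
            push_cast
            ring
          rw [hev]
          have h1c : 0 ≤ 1 - c⁻¹ * t := by
            have h : c⁻¹ * t ≤ 1 := by
              rw [← div_eq_inv_mul]
              exact (div_le_one hcpos).mpr htc
            linarith
          have hnn : 0 ≤ t * (1 - c⁻¹ * t) ^ m := mul_nonneg ht0 (pow_nonneg h1c m)
          rw [Complex.norm_real, Real.norm_eq_abs, abs_of_nonneg hnn]
          exact hB t ht0 htc
        have h4 : spectralRadius ℂ w ≤ ENNReal.ofReal B := by
          rw [spectralRadius]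
          refine iSup₂_le fun z hz => ?_
          rw [← enorm_eq_nnnorm, ← ofReal_norm]
          exact ENNReal.ofReal_le_ofReal (hbound z hz)
        have h5 : ENNReal.ofReal ‖w‖ ≤ ENNReal.ofReal B := by
          rw [ofReal_norm, enorm_eq_nnnorm, ← hsw.spectralRadius_eq_nnnorm]
          exact h4
        exact (ENNReal.ofReal_le_ofReal_iff hB0).mp h5
      -- convergence
      have hcl : v ∈ closure (T' : Set (H →L[ℂ] L)) := by
        rw [Metric.mem_closure_iff]
        intro ε hε
        set δ : ℝ := min (ε ^ 2 / 2) c with hδdef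
        have hδ0 : 0 < δ := lt_min (by positivity) hcpos
        have hδc : δ ≤ c := min_le_right _ _
        set r : ℝ := 1 - c⁻¹ * δ with hrdef
        have hr0 : 0 ≤ r := by
          have h : c⁻¹ * δ ≤ 1 := by
            rw [← div_eq_inv_mul]
            exact (div_le_one hcpos).mpr hδc
          simp only [hrdef]; linarith
        have hr1 : r < 1 := by
          have h : 0 < c⁻¹ * δ := mul_pos (inv_pos.mpr hcpos) hδ0
          simp only [hrdef]; linarith
        obtain ⟨N, hN⟩ := Filter.eventually_atTop.mp
          ((tendsto_pow_atTop_nhds_zero_of_lt_one hr0 hr1).eventually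
            (gt_mem_nhds (show (0:ℝ) < δ / c from div_pos hδ0 hcpos)))
        have hgeo : c * r ^ (N * 2) ≤ δ := by
          have h := hN (N * 2) (by omega)
          have h2 : c * r ^ (N * 2) < c * (δ / c) :=
            mul_lt_mul_of_pos_left h hcpos
          have h3 : c * (δ / c) = δ := by field_simp
          rw [h3] at h2
          exact le_of_lt h2
        have hB : ∀ t : ℝ, 0 ≤ t → t ≤ c → t * (1 - c⁻¹ * t) ^ (N * 2) ≤ δ := by
          intro t ht0 htc
          have h1c : 0 ≤ 1 - c⁻¹ * t := by
            have h : c⁻¹ * t ≤ 1 := by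
              rw [← div_eq_inv_mul]
              exact (div_le_one hcpos).mpr htc
            linarith
          rcases le_or_gt t δ with h | h
          · have hp1 : (1 - c⁻¹ * t) ^ (N * 2) ≤ 1 := by
              apply pow_le_one₀ h1c
              have : 0 ≤ c⁻¹ * t := mul_nonneg (inv_nonneg.mpr (le_of_lt hcpos)) ht0
              linarith
            calc t * (1 - c⁻¹ * t) ^ (N * 2) ≤ t * 1 :=
                  mul_le_mul_of_nonneg_left hp1 ht0
              _ = t := mul_one t
              _ ≤ δ := h
          · have hmono : (1 - c⁻¹ * t) ^ (N * 2) ≤ r ^ (N * 2) := by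
              apply pow_le_pow_left₀ h1c
              have : c⁻¹ * δ ≤ c⁻¹ * t :=
                mul_le_mul_of_nonneg_left (le_of_lt h) (inv_nonneg.mpr (le_of_lt hcpos))
              simp only [hrdef]; linarith
            calc t * (1 - c⁻¹ * t) ^ (N * 2) ≤ c * r ^ (N * 2) := by
                  apply mul_le_mul htc hmono (pow_nonneg h1c _) (le_of_lt hcpos)
              _ ≤ δ := hgeo
        have hwb : ‖a * e ^ (N * 2)‖ ≤ δ := hnorm N δ (le_of_lt hδ0) hB
        refine ⟨v ∘L ((1 : H →L[ℂ] H) - e ^ N), (hmain N).2, ?_⟩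
        have hyd : v - v ∘L ((1 : H →L[ℂ] H) - e ^ N) = v ∘L e ^ N := by
          rw [comp_sub, ContinuousLinearMap.one_def, ContinuousLinearMap.comp_id,
            sub_sub_cancel]
        rw [dist_eq_norm, hyd]
        have hsq : ‖v ∘L e ^ N‖ * ‖v ∘L e ^ N‖ ≤ δ := by
          rw [← norm_adjoint_comp_self, hw N]
          exact hwb
        have hδε : δ ≤ ε ^ 2 / 2 := min_le_left _ _
        nlinarith [norm_nonneg (v ∘L e ^ N)]
      rwa [(Submodule.isClosed_topologicalClosure _).closure_eq] at hcl

end Aux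

/-- If `Δ ⊆ L(H,K)` and `Γ ⊆ L(K,L)` are concrete C*-modules with
`[Γ*ΓΔ] ⊆ Δ`, then `[ΓΔ] ⊆ L(H,L)` is a concrete C*-module:
`[[ΓΔ][ΓΔ]*[ΓΔ]] = [ΓΔ]`. -/
theorem stmt3
    {H K L : Type*} [NormedAddCommGroup H] [InnerProductSpace ℂ H] [CompleteSpace H]
    [NormedAddCommGroup K] [InnerProductSpace ℂ K] [CompleteSpace K]
    [NormedAddCommGroup L] [InnerProductSpace ℂ L] [CompleteSpace L]
    (Δ : Set (H →L[ℂ] K)) (Γ : Set (K →L[ℂ] L))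
    (hΔclosed : clspan Δ = Δ)
    (hΔ : clspan (Set.image2 (fun (S : K →L[ℂ] K) (T : H →L[ℂ] K) => S ∘L T)
        (Set.image2 (fun (S T : H →L[ℂ] K) => S ∘L adjoint T) Δ Δ) Δ) = Δ)
    (hΓclosed : clspan Γ = Γ)
    (hΓ : clspan (Set.image2 (fun (S : L →L[ℂ] L) (T : K →L[ℂ] L) => S ∘L T)
        (Set.image2 (fun (S T : K →L[ℂ] L) => S ∘L adjoint T) Γ Γ) Γ) = Γ)
    (hΓΓΔ : clspan (Set.image2 (fun (S : K →L[ℂ] K) (T : H →L[ℂ] K) => S ∘L T)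
        (Set.image2 (fun (S T : K →L[ℂ] L) => adjoint S ∘L T) Γ Γ) Δ) ⊆ Δ) :
    clspan (Set.image2 (fun (S : L →L[ℂ] L) (T : H →L[ℂ] L) => S ∘L T)
        (Set.image2 (fun (S T : H →L[ℂ] L) => S ∘L adjoint T)
          (clspan (Set.image2 (fun (S : K →L[ℂ] L) (T : H →L[ℂ] K) => S ∘L T) Γ Δ))
          (clspan (Set.image2 (fun (S : K →L[ℂ] L) (T : H →L[ℂ] K) => S ∘L T) Γ Δ)))
        (clspan (Set.image2 (fun (S : K →L[ℂ] L) (T : H →L[ℂ] K) => S ∘L T) Γ Δ)))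
      = clspan (Set.image2 (fun (S : K →L[ℂ] L) (T : H →L[ℂ] K) => S ∘L T) Γ Δ) := by
  apply key
  apply tri_mem _ (Submodule.isClosed_topologicalClosure _)
  rintro _ ⟨g₁, hg₁, d₁, hd₁, rfl⟩ _ ⟨g₂, hg₂, d₂, hd₂, rfl⟩ _ ⟨g₃, hg₃, d₃, hd₃, rfl⟩
  have hd' : (adjoint g₂ ∘L g₃) ∘L d₃ ∈ Δ :=
    hΓΓΔ (subset_clspan _
      (Set.mem_image2_of_mem (Set.mem_image2_of_mem hg₂ hg₃) hd₃))
  have hd'' : (d₁ ∘L adjoint d₂) ∘L ((adjoint g₂ ∘L g₃) ∘L d₃) ∈ Δ := by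
    rw [← hΔ]
    exact subset_clspan _
      (Set.mem_image2_of_mem (Set.mem_image2_of_mem hd₁ hd₂) hd')
  have heq : ((g₁ ∘L d₁) ∘L adjoint (g₂ ∘L d₂)) ∘L (g₃ ∘L d₃)
      = g₁ ∘L ((d₁ ∘L adjoint d₂) ∘L ((adjoint g₂ ∘L g₃) ∘L d₃)) := by
    rw [adjoint_comp]
    ext x
    rfl
  rw [heq]
  exact Submodule.le_topologicalClosure _
    (Submodule.subset_span (Set.mem_image2_of_mem hg₁ hd''))
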